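/- Let G be a weighted graph and x a fractional matching on G (i.e., x_e ≥ 0 for each edge and Σ_{e∋u} x_e ≤ 1 for each vertex u). Suppose that for every vertex set S ⊆ V with |S| ≤ 1/ε, we have Σ_{e ∈ G[S]} x_e ≤ ⌊|S|/2⌋. Then the maximum weight matching satisfies μ_w(G) ≥ (1−ε)·Σ_e w_e x_e. -/

import Mathlib

open scoped Classical BigOperators

noncomputable section

variable {V : Type*}

/-- A matching: a set of non-loop edges, pairwise vertex-disjoint. -/
def IsMatching (M : Finset (Sym2 V)) : Prop :=
  (∀ e ∈ M, ¬ e.IsDiag) ∧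
    ∀ e ∈ M, ∀ f ∈ M, e ≠ f → ∀ v : V, v ∈ e → v ∉ f

/-- μ(G): maximum cardinality of a matching contained in `G`. -/
def matchNum (G : Finset (Sym2 V)) : ℕ :=
  sSup {k | ∃ M : Finset (Sym2 V), M ⊆ G ∧ IsMatching M ∧ M.card = k}

/-- μ_w(G): maximum weight of a matching contained in `G` (ℕ-valued weights). -/
def matchWeight (G : Finset (Sym2 V)) (w : Sym2 V → ℕ) : ℕ :=
  sSup {s | ∃ M : Finset (Sym2 V), M ⊆ G ∧ IsMatching M ∧ ∑ e ∈ M, w e = s}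

/-- μ_w(G): maximum weight of a matching contained in `G` (ℝ-valued weights). -/
def matchWeightR (G : Finset (Sym2 V)) (w : Sym2 V → ℝ) : ℝ :=
  sSup {s | ∃ M : Finset (Sym2 V), M ⊆ G ∧ IsMatching M ∧ ∑ e ∈ M, w e = s}

/-- Degree of a vertex in an edge set. -/
def deg (H : Finset (Sym2 V)) (v : V) : ℕ := (H.filter fun e => v ∈ e).card

/-- The edge-degree deg_H(u) + deg_H(v) of an edge e = (u,v). -/
def degSum (H : Finset (Sym2 V)) (e : Sym2 V) : ℕ :=
  deg H e.out.1 + deg H e.out.2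

/-- The unfolded copies of a weighted edge e = (u,v):
the edges (u^i, v^{w_e+1-i}) for i ∈ [w_e]. -/
def unfoldEdge (w : Sym2 V → ℕ) (e : Sym2 V) : Finset (Sym2 (V × ℕ)) :=
  (Finset.Icc 1 (w e)).image fun i => s((e.out.1, i), (e.out.2, w e + 1 - i))

/-- The unfolding φ(G) of a weighted graph. -/
def unfoldGraph (G : Finset (Sym2 V)) (w : Sym2 V → ℕ) : Finset (Sym2 (V × ℕ)) :=
  G.biUnion (unfoldEdge w)

/-- The refolding R(H) ⊆ G of a subgraph H ⊆ φ(G): the weighted edges having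
at least one unfolded copy in H. -/
def refold (G : Finset (Sym2 V)) (w : Sym2 V → ℕ)
    (H : Finset (Sym2 (V × ℕ))) : Finset (Sym2 V) :=
  G.filter fun e => ∃ f ∈ unfoldEdge w e, f ∈ H

/-- A bipartite edge set: some side `A` of a bipartition meets every edge exactly once. -/
def IsBipartite (G : Finset (Sym2 V)) : Prop :=
  ∃ A : Set V, ∀ e ∈ G, ∃ u v, e = s(u, v) ∧ u ∈ A ∧ v ∉ A
section Basics

variable {V : Type*}

lemma isMatching_empty : IsMatching (∅ : Finset (Sym2 V)) :=
  ⟨by simp, by simp⟩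

lemma deg_le_one_of_isMatching {M : Finset (Sym2 V)} (hM : IsMatching M) (v : V) :
    deg M v ≤ 1 := by
  by_contra h
  push_neg at h
  rw [deg] at h
  obtain ⟨e, he, f, hf, hne⟩ := Finset.one_lt_card.mp h
  simp only [Finset.mem_filter] at he hf
  exact hM.2 e he.1 f hf.1 hne v he.2 hf.2

lemma isMatching_of_deg_le_one {M : Finset (Sym2 V)} (hnd : ∀ e ∈ M, ¬ e.IsDiag)
    (h : ∀ v, deg M v ≤ 1) : IsMatching M := by
  refine ⟨hnd, fun e he f hf hne v hve hvf => ?_⟩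
  have : 1 < (M.filter fun e => v ∈ e).card := by
    apply Finset.one_lt_card.mpr
    exact ⟨e, by simp [he, hve], f, by simp [hf, hvf], hne⟩
  exact absurd (h v) (by rw [deg] at *; omega)

/-- The set whose sup is `matchWeightR` is the coercion of a finite image. -/
lemma matchWeightR_set_eq (G : Finset (Sym2 V)) (w : Sym2 V → ℝ) :
    {s | ∃ M : Finset (Sym2 V), M ⊆ G ∧ IsMatching M ∧ ∑ e ∈ M, w e = s} =
      ↑((G.powerset.filter (fun M => IsMatching M)).image (fun M => ∑ e ∈ M, w e)) := by
  ext s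
  simp only [Set.mem_setOf_eq, Finset.coe_image, Set.mem_image, Finset.mem_coe,
    Finset.mem_filter, Finset.mem_powerset]
  constructor
  · rintro ⟨M, h1, h2, h3⟩; exact ⟨M, ⟨h1, h2⟩, h3⟩
  · rintro ⟨M, ⟨h1, h2⟩, h3⟩; exact ⟨M, h1, h2, h3⟩

lemma matchWeightR_ge (G : Finset (Sym2 V)) (w : Sym2 V → ℝ) {M : Finset (Sym2 V)}
    (hMG : M ⊆ G) (hM : IsMatching M) : (∑ e ∈ M, w e) ≤ matchWeightR G w := by
  apply le_csSup
  · rw [matchWeightR_set_eq]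
    exact (Finset.finite_toSet _).bddAbove
  · exact ⟨M, hMG, hM, rfl⟩

lemma matchWeightR_nonneg (G : Finset (Sym2 V)) (w : Sym2 V → ℝ) :
    0 ≤ matchWeightR G w := by
  simpa using matchWeightR_ge G w (Finset.empty_subset G) isMatching_empty

/-- `matchWeight` is attained by some matching. -/
lemma matchWeight_spec (G : Finset (Sym2 V)) (w : Sym2 V → ℕ) :
    ∃ M : Finset (Sym2 V), M ⊆ G ∧ IsMatching M ∧ ∑ e ∈ M, w e = matchWeight G w := by
  have hset : {s | ∃ M : Finset (Sym2 V), M ⊆ G ∧ IsMatching M ∧ ∑ e ∈ M, w e = s} =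
      ↑((G.powerset.filter (fun M => IsMatching M)).image (fun M => ∑ e ∈ M, w e)) := by
    ext s
    simp only [Set.mem_setOf_eq, Finset.coe_image, Set.mem_image, Finset.mem_coe,
      Finset.mem_filter, Finset.mem_powerset]
    constructor
    · rintro ⟨M, h1, h2, h3⟩; exact ⟨M, ⟨h1, h2⟩, h3⟩
    · rintro ⟨M, ⟨h1, h2⟩, h3⟩; exact ⟨M, h1, h2, h3⟩
  have hmem : matchWeight G w ∈
      {s | ∃ M : Finset (Sym2 V), M ⊆ G ∧ IsMatching M ∧ ∑ e ∈ M, w e = s} := by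
    apply Nat.sSup_mem
    · exact ⟨0, ∅, Finset.empty_subset G, isMatching_empty, by simp⟩
    · rw [hset]; exact (Finset.finite_toSet _).bddAbove
  obtain ⟨M, h1, h2, h3⟩ := hmem
  exact ⟨M, h1, h2, h3⟩

lemma le_matchWeight (G : Finset (Sym2 V)) (w : Sym2 V → ℕ) {M : Finset (Sym2 V)}
    (hMG : M ⊆ G) (hM : IsMatching M) : (∑ e ∈ M, w e) ≤ matchWeight G w := by
  apply le_csSup
  · have hset := matchWeightR_set_eq G (fun e => (w e : ℝ))
    -- bddAbove for ℕ set directly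
    rw [show {s | ∃ M : Finset (Sym2 V), M ⊆ G ∧ IsMatching M ∧ ∑ e ∈ M, w e = s} =
      ↑((G.powerset.filter (fun M => IsMatching M)).image (fun M => ∑ e ∈ M, w e)) by
      ext s
      simp only [Set.mem_setOf_eq, Finset.coe_image, Set.mem_image, Finset.mem_coe,
        Finset.mem_filter, Finset.mem_powerset]
      exact ⟨fun ⟨M, h1, h2, h3⟩ => ⟨M, ⟨h1, h2⟩, h3⟩, fun ⟨M, ⟨h1, h2⟩, h3⟩ => ⟨M, h1, h2, h3⟩⟩]
    exact (Finset.finite_toSet _).bddAbove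
  · exact ⟨M, hMG, hM, rfl⟩

end Basics
section Counting

variable {V : Type*}

lemma filter_mem_card_le_two (CF : Finset V) (e : Sym2 V) :
    (CF.filter (· ∈ e)).card ≤ 2 := by
  induction e using Sym2.ind with
  | _ a b =>
    have : CF.filter (· ∈ s(a, b)) ⊆ {a, b} := by
      intro v hv
      simp only [Finset.mem_filter, Sym2.mem_iff] at hv
      simp only [Finset.mem_insert, Finset.mem_singleton]
      exact hv.2
    calc (CF.filter (· ∈ s(a,b))).card ≤ ({a, b} : Finset V).card := Finset.card_le_card this
      _ ≤ 2 := Finset.card_insert_le a {b} |>.trans (by simp)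

lemma filter_mem_card_eq_two {CF : Finset V} {e : Sym2 V} (hnd : ¬ e.IsDiag)
    (h : ∀ v ∈ e, v ∈ CF) : (CF.filter (· ∈ e)).card = 2 := by
  induction e using Sym2.ind with
  | _ a b =>
    have hab : a ≠ b := by simpa [Sym2.mk_isDiag_iff] using hnd
    have : CF.filter (· ∈ s(a, b)) = {a, b} := by
      ext v
      simp only [Finset.mem_filter, Sym2.mem_iff, Finset.mem_insert, Finset.mem_singleton]
      constructor
      · exact fun hv => hv.2
      · rintro (rfl | rfl)
        · exact ⟨h v (by simp), Or.inl rfl⟩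
        · exact ⟨h v (by simp), Or.inr rfl⟩
    rw [this, Finset.card_insert_of_notMem (by simpa using hab), Finset.card_singleton]

/-- Double counting, weighted version. -/
lemma sum_sum_filter_eq (CF : Finset V) (K : Finset (Sym2 V)) (x : Sym2 V → ℝ) :
    ∑ v ∈ CF, ∑ e ∈ K.filter (fun e => v ∈ e), x e
      = ∑ e ∈ K, ((CF.filter (· ∈ e)).card : ℝ) * x e := by
  have h1 : ∀ v ∈ CF, ∑ e ∈ K.filter (fun e => v ∈ e), x e
      = ∑ e ∈ K, if v ∈ e then x e else 0 := by
    intro v _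
    rw [Finset.sum_filter]
  rw [Finset.sum_congr rfl h1, Finset.sum_comm]
  apply Finset.sum_congr rfl
  intro e _
  rw [← Finset.sum_filter, Finset.sum_const, nsmul_eq_mul]

/-- Double counting, cardinality version. -/
lemma sum_deg_eq (CF : Finset V) (K : Finset (Sym2 V)) :
    ∑ v ∈ CF, deg K v = ∑ e ∈ K, (CF.filter (· ∈ e)).card := by
  have h1 : ∀ v ∈ CF, deg K v = ∑ e ∈ K, if v ∈ e then 1 else 0 := by
    intro v _
    rw [deg, Finset.card_filter]
  rw [Finset.sum_congr rfl h1, Finset.sum_comm]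
  apply Finset.sum_congr rfl
  intro e _
  rw [← Finset.card_filter]

lemma handshake {CF : Finset V} {K : Finset (Sym2 V)} (hnd : ∀ e ∈ K, ¬ e.IsDiag)
    (h : ∀ e ∈ K, ∀ v ∈ e, v ∈ CF) : ∑ v ∈ CF, deg K v = 2 * K.card := by
  rw [sum_deg_eq]
  rw [Finset.sum_congr rfl (fun e he => filter_mem_card_eq_two (hnd e he) (h e he))]
  rw [Finset.sum_const, smul_eq_mul, mul_comm]

/-- Degree-sum bound for fractional matchings: edges inside `S` are counted twice. -/
lemma blossom_from_degrees {G : Finset (Sym2 V)} (hG : ∀ e ∈ G, ¬ e.IsDiag)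
    {x : Sym2 V → ℝ} (hx0 : ∀ e, 0 ≤ x e) (S : Finset V) :
    2 * ∑ e ∈ G.filter (fun e => ∀ v ∈ e, v ∈ S), x e
      ≤ ∑ v ∈ S, ∑ e ∈ G.filter (fun e => v ∈ e), x e := by
  rw [sum_sum_filter_eq]
  have h2 : ∑ e ∈ G.filter (fun e => ∀ v ∈ e, v ∈ S), ((S.filter (· ∈ e)).card : ℝ) * x e
      ≤ ∑ e ∈ G, ((S.filter (· ∈ e)).card : ℝ) * x e := by
    apply Finset.sum_le_sum_of_subset_of_nonneg (Finset.filter_subset _ _)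
    intro e _ _
    exact mul_nonneg (by positivity) (hx0 e)
  refine le_trans ?_ h2
  rw [two_mul, ← Finset.sum_add_distrib]
  apply Finset.sum_le_sum
  intro e he
  simp only [Finset.mem_filter] at he
  rw [filter_mem_card_eq_two (hG e he.1) he.2]
  push_cast
  linarith [hx0 e]

end Counting
section MatchOps

variable {V : Type*}

lemma isMatching_insert {N : Finset (Sym2 V)} (hN : IsMatching N) {u v : V}
    (huv : u ≠ v) (hu : ∀ e ∈ N, u ∉ e) (hv : ∀ e ∈ N, v ∉ e) :
    IsMatching (insert s(u, v) N) := by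
  constructor
  · intro e he
    rcases Finset.mem_insert.mp he with rfl | he'
    · simpa [Sym2.mk_isDiag_iff] using huv
    · exact hN.1 e he'
  · intro e he f hf hef z hze hzf
    rcases Finset.mem_insert.mp he with rfl | he' <;>
      rcases Finset.mem_insert.mp hf with rfl | hf'
    · exact hef rfl
    · rcases Sym2.mem_iff.mp hze with rfl | rfl
      · exact hu f hf' hzf
      · exact hv f hf' hzf
    · rcases Sym2.mem_iff.mp hzf with rfl | rfl
      · exact hu e he' hze
      · exact hv e he' hze
    · exact hN.2 e he' f hf' hef z hze hzf

lemma isMatching_union {M₁ M₂ : Finset (Sym2 V)} (h₁ : IsMatching M₁) (h₂ : IsMatching M₂)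
    (hdisj : ∀ e ∈ M₁, ∀ f ∈ M₂, ∀ v : V, v ∈ e → v ∉ f) :
    IsMatching (M₁ ∪ M₂) := by
  constructor
  · intro e he
    rcases Finset.mem_union.mp he with h | h
    · exact h₁.1 e h
    · exact h₂.1 e h
  · intro e he f hf hef z hze hzf
    rcases Finset.mem_union.mp he with h | h <;> rcases Finset.mem_union.mp hf with h' | h'
    · exact h₁.2 e h f h' hef z hze hzf
    · exact hdisj e h f h' z hze hzf
    · exact hdisj f h' e h z hzf hze
    · exact h₂.2 e h f h' hef z hze hzf

section Swap

variable {N M K : Finset (Sym2 V)}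

/-- In the swap `N Δ K`, a vertex touched by `K` sees exactly its `M`-edges. -/
lemma swap_filter_eq_of_touched (hN : IsMatching N)
    (hK : K ⊆ (N ∪ M) \ (N ∩ M))
    (hcl : ∀ e ∈ K, ∀ f ∈ (N ∪ M) \ (N ∩ M), ∀ v : V, v ∈ e → v ∈ f → f ∈ K)
    {v : V} (hv : ∃ e ∈ K, v ∈ e) :
    ((N \ K) ∪ (K \ N)).filter (fun f => v ∈ f) = M.filter (fun f => v ∈ f) := by
  obtain ⟨e, heK, hve⟩ := hv
  ext f
  simp only [Finset.mem_filter, Finset.mem_union, Finset.mem_sdiff]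
  constructor
  · rintro ⟨hf | hf, hvf⟩
    · -- f ∈ N \ K
      by_contra hcon
      push_neg at hcon
      have hfM : f ∉ M := fun h => hcon h hvf
      have hfH : f ∈ (N ∪ M) \ (N ∩ M) := by
        simp only [Finset.mem_sdiff, Finset.mem_union, Finset.mem_inter]
        exact ⟨Or.inl hf.1, fun h => hfM h.2⟩
      exact hf.2 (hcl e heK f hfH v hve hvf)
    · -- f ∈ K \ N ⊆ M
      have := hK hf.1
      simp only [Finset.mem_sdiff, Finset.mem_union, Finset.mem_inter] at this
      rcases this.1 with h | h
      · exact absurd h hf.2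
      · exact ⟨h, hvf⟩
  · rintro ⟨hfM, hvf⟩
    by_cases hfN : f ∈ N
    · refine ⟨Or.inl ⟨hfN, fun hfK => ?_⟩, hvf⟩
      have := hK hfK
      simp only [Finset.mem_sdiff, Finset.mem_union, Finset.mem_inter] at this
      exact this.2 ⟨hfN, hfM⟩
    · refine ⟨Or.inr ⟨?_, hfN⟩, hvf⟩
      apply hcl e heK f ?_ v hve hvf
      simp only [Finset.mem_sdiff, Finset.mem_union, Finset.mem_inter]
      exact ⟨Or.inr hfM, fun h => hfN h.1⟩

/-- In the swap `N Δ K`, a vertex not touched by `K` sees exactly its `N`-edges. -/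
lemma swap_filter_eq_of_untouched {v : V} (hv : ∀ e ∈ K, v ∉ e) :
    ((N \ K) ∪ (K \ N)).filter (fun f => v ∈ f) = N.filter (fun f => v ∈ f) := by
  ext f
  simp only [Finset.mem_filter, Finset.mem_union, Finset.mem_sdiff]
  constructor
  · rintro ⟨hf | hf, hvf⟩
    · exact ⟨hf.1, hvf⟩
    · exact absurd hvf (hv f hf.1)
  · rintro ⟨hfN, hvf⟩
    exact ⟨Or.inl ⟨hfN, fun hfK => hv f hfK hvf⟩, hvf⟩

lemma swap_isMatching (hN : IsMatching N) (hM : IsMatching M)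
    (hK : K ⊆ (N ∪ M) \ (N ∩ M))
    (hcl : ∀ e ∈ K, ∀ f ∈ (N ∪ M) \ (N ∩ M), ∀ v : V, v ∈ e → v ∈ f → f ∈ K) :
    IsMatching ((N \ K) ∪ (K \ N)) := by
  apply isMatching_of_deg_le_one
  · intro e he
    rcases Finset.mem_union.mp he with h | h
    · exact hN.1 e (Finset.mem_sdiff.mp h).1
    · have := hK (Finset.mem_sdiff.mp h).1
      simp only [Finset.mem_sdiff, Finset.mem_union, Finset.mem_inter] at this
      rcases this.1 with h' | h'
      · exact hN.1 e h'
      · exact hM.1 e h'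
  · intro v
    by_cases hv : ∃ e ∈ K, v ∈ e
    · rw [deg, swap_filter_eq_of_touched hN hK hcl hv]
      exact deg_le_one_of_isMatching hM v
    · push_neg at hv
      rw [deg, swap_filter_eq_of_untouched hv]
      exact deg_le_one_of_isMatching hN v

/-- Weight bookkeeping for the swap, subtraction-free. -/
lemma swap_sum {R : Type*} [AddCommMonoid R] (wt : Sym2 V → R) (K N : Finset (Sym2 V)) :
    ∑ e ∈ (N \ K) ∪ (K \ N), wt e + ∑ e ∈ N ∩ K, wt e
      = ∑ e ∈ N, wt e + ∑ e ∈ K \ N, wt e := by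
  have h1 : ((N \ K) ∪ (K \ N)) ∩ (N ∩ K) = ∅ := by
    ext f
    simp only [Finset.mem_inter, Finset.mem_union, Finset.mem_sdiff, Finset.notMem_empty,
      iff_false]
    rintro ⟨h | h, h2⟩
    · exact h.2 h2.2
    · exact h.2 h2.1
  have hdisj : Disjoint ((N \ K) ∪ (K \ N)) (N ∩ K) := by
    rw [Finset.disjoint_iff_inter_eq_empty]; exact h1
  rw [← Finset.sum_union hdisj]
  have h2 : Disjoint N (K \ N) := by
    rw [Finset.disjoint_iff_inter_eq_empty]
    ext f; simp only [Finset.mem_inter, Finset.mem_sdiff, Finset.notMem_empty, iff_false]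
    rintro ⟨h, h'⟩; exact h'.2 h
  rw [← Finset.sum_union h2]
  apply Finset.sum_congr _ (fun _ _ => rfl)
  ext f
  simp only [Finset.mem_union, Finset.mem_sdiff, Finset.mem_inter]
  by_cases hfN : f ∈ N <;> by_cases hfK : f ∈ K <;> simp [hfN, hfK]

end Swap

end MatchOps
section GraphInfra

variable {V : Type*}

/-- The simple graph associated with an edge finset. -/
def graphOf (A : Finset (Sym2 V)) : SimpleGraph V where
  Adj a b := a ≠ b ∧ s(a, b) ∈ A
  symm := by
    constructor
    intro a b h
    refine ⟨Ne.symm h.1, ?_⟩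
    rw [Sym2.eq_swap]
    exact h.2
  loopless := ⟨fun a h => h.1 rfl⟩

lemma sym2_out_eq (e : Sym2 V) : s(e.out.1, e.out.2) = e := by
  exact Quot.out_eq e

lemma exists_mem_sym2 (e : Sym2 V) : ∃ v, v ∈ e := by
  induction e using Sym2.ind with
  | _ a b => exact ⟨a, by simp⟩

lemma adj_graphOf {A : Finset (Sym2 V)} (hA : ∀ e ∈ A, ¬ e.IsDiag) {a b : V}
    (h : s(a, b) ∈ A) : (graphOf A).Adj a b := by
  refine ⟨?_, h⟩
  intro hab
  subst hab
  exact hA _ h (by simp [Sym2.mk_isDiag_iff])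

/-- Every vertex reachable from `t` and distinct from `t` has a neighbour strictly
closer to `t`. -/
lemma exists_pred {A : Finset (Sym2 V)} {t v : V}
    (h : (graphOf A).Reachable t v) (hne : v ≠ t) :
    ∃ b, (graphOf A).Adj v b ∧ (graphOf A).dist t b + 1 = (graphOf A).dist t v := by
  set GA := graphOf A
  have hpos : 0 < GA.dist t v := h.pos_dist_of_ne (Ne.symm hne)
  obtain ⟨p, hp⟩ := h.exists_walk_length_eq_dist
  have hrev : (p.reverse : GA.Walk v t).length = GA.dist t v := by
    rw [SimpleGraph.Walk.length_reverse, hp]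
  obtain ⟨b, hadj, q, hq⟩ := SimpleGraph.Walk.exists_eq_cons_of_ne hne p.reverse
  refine ⟨b, hadj, ?_⟩
  have hql : q.length + 1 = GA.dist t v := by
    rw [← hrev, hq]; simp
  have h1 : GA.dist t b ≤ q.length := by
    have := SimpleGraph.dist_le q.reverse
    simpa using this
  have h2 : GA.dist t v ≤ GA.dist t b + 1 := by
    have hreach : GA.Reachable t b := h.trans hadj.reachable
    obtain ⟨r, hr⟩ := hreach.exists_walk_length_eq_dist
    have := SimpleGraph.dist_le (r.concat hadj.symm)
    rwa [SimpleGraph.Walk.length_concat, hr] at this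
  omega

end GraphInfra
section Component

variable {V : Type*}

lemma mem_pair_out {v : V} (e : Sym2 V) :
    v ∈ ({e.out.1, e.out.2} : Finset V) ↔ v ∈ e := by
  have h : v ∈ e ↔ v ∈ s(e.out.1, e.out.2) := by rw [sym2_out_eq]
  rw [h, Sym2.mem_iff]
  simp

lemma mem_CF_iff {K : Finset (Sym2 V)} {v : V} :
    v ∈ K.biUnion (fun e => ({e.out.1, e.out.2} : Finset V)) ↔ ∃ e ∈ K, v ∈ e := by
  simp only [Finset.mem_biUnion]
  constructor
  · rintro ⟨e, he, hv⟩; exact ⟨e, he, (mem_pair_out e).mp hv⟩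
  · rintro ⟨e, he, hv⟩; exact ⟨e, he, (mem_pair_out e).mpr hv⟩

lemma sym2_eq_of_mem {e : Sym2 V} {a b : V} (ha : a ∈ e) (hb : b ∈ e) (hab : a ≠ b) :
    e = s(a, b) := ((Sym2.mem_and_mem_iff hab).mp ⟨ha, hb⟩)

/-- The component `K` of the edge set `H` containing `t` has at least `|CF| - 1` edges,
where `CF` is its vertex set. -/
lemma card_CF_le_card_K {H : Finset (Sym2 V)} (t : V)
    {K : Finset (Sym2 V)}
    (hK : K = H.filter (fun e => ∀ z ∈ e, (graphOf H).Reachable t z)) :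
    (K.biUnion (fun e => ({e.out.1, e.out.2} : Finset V))).card ≤ K.card + 1 := by
  classical
  set GH := graphOf H with hGH
  set CF := K.biUnion (fun e => ({e.out.1, e.out.2} : Finset V)) with hCF
  have hreach : ∀ v ∈ CF, GH.Reachable t v := by
    intro v hv
    obtain ⟨e, heK, hve⟩ := mem_CF_iff.mp hv
    rw [hK, Finset.mem_filter] at heK
    exact heK.2 v hve
  have hpred : ∀ v ∈ CF.erase t, ∃ b, GH.Adj v b ∧ GH.dist t b + 1 = GH.dist t v := by
    intro v hv
    rw [Finset.mem_erase] at hv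
    exact exists_pred (hreach v hv.2) hv.1
  have hstep : (CF.erase t).card ≤ K.card := by
    apply Finset.card_le_card_of_injOn
      (fun v => if h : ∃ b, GH.Adj v b ∧ GH.dist t b + 1 = GH.dist t v
        then s(v, Classical.choose h) else s(v, v))
    · intro v hv
      obtain ⟨b, hb⟩ := hpred v hv
      simp only [Finset.mem_coe]
      rw [dif_pos ⟨b, hb⟩]
      set b' := Classical.choose (⟨b, hb⟩ : ∃ b, GH.Adj v b ∧ GH.dist t b + 1 = GH.dist t v)
        with hb'
      have hs := Classical.choose_spec (⟨b, hb⟩ :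
        ∃ b, GH.Adj v b ∧ GH.dist t b + 1 = GH.dist t v)
      rw [hK, Finset.mem_filter]
      have hvb : s(v, b') ∈ H := hs.1.2
      refine ⟨hvb, ?_⟩
      intro z hz
      rcases Sym2.mem_iff.mp hz with rfl | rfl
      · exact hreach _ (Finset.mem_of_mem_erase hv)
      · exact (hreach _ (Finset.mem_of_mem_erase hv)).trans hs.1.reachable
    · intro v hv v' hv' heq
      by_contra hne
      simp only at heq
      obtain ⟨b, hb⟩ := hpred v hv
      obtain ⟨b', hb'⟩ := hpred v' hv'
      rw [dif_pos ⟨b, hb⟩, dif_pos ⟨b', hb'⟩] at heq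
      have hs := Classical.choose_spec (⟨b, hb⟩ :
        ∃ c, GH.Adj v c ∧ GH.dist t c + 1 = GH.dist t v)
      have hs' := Classical.choose_spec (⟨b', hb'⟩ :
        ∃ c, GH.Adj v' c ∧ GH.dist t c + 1 = GH.dist t v')
      rw [Sym2.eq_iff] at heq
      rcases heq with ⟨h1, -⟩ | ⟨h1, h2⟩
      · exact hne h1
      · -- v = choose h', v' = choose h
        rw [← h1] at hs'
        rw [h2] at hs
        omega
  by_cases ht : t ∈ CF
  · have := Finset.card_erase_add_one ht
    omega
  · rw [Finset.erase_eq_of_notMem ht] at hstep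
    omega

end Component
section DegHelpers

variable {V : Type*}

lemma isMatching_subset {M' M : Finset (Sym2 V)} (h : M' ⊆ M) (hM : IsMatching M) :
    IsMatching M' :=
  ⟨fun e he => hM.1 e (h he), fun e he f hf hef v hv hv' => hM.2 e (h he) f (h hf) hef v hv hv'⟩

lemma deg_mono {H' H : Finset (Sym2 V)} (h : H' ⊆ H) (v : V) : deg H' v ≤ deg H v :=
  Finset.card_le_card (Finset.filter_subset_filter _ h)

lemma deg_eq_zero_iff {H : Finset (Sym2 V)} {v : V} :
    deg H v = 0 ↔ ∀ e ∈ H, v ∉ e := by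
  rw [deg, Finset.card_eq_zero, Finset.filter_eq_empty_iff]

lemma one_le_deg {H : Finset (Sym2 V)} {v : V} {e : Sym2 V} (he : e ∈ H) (hv : v ∈ e) :
    1 ≤ deg H v := by
  rw [deg, Nat.one_le_iff_ne_zero, ← Nat.pos_iff_ne_zero, Finset.card_pos]
  exact ⟨e, Finset.mem_filter.mpr ⟨he, hv⟩⟩

lemma exists_edge_of_deg_pos {H : Finset (Sym2 V)} {v : V} (h : 0 < deg H v) :
    ∃ e ∈ H, v ∈ e := by
  rw [deg, Finset.card_pos] at h
  obtain ⟨e, he⟩ := h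
  rw [Finset.mem_filter] at he
  exact ⟨e, he.1, he.2⟩

/-- From an edge of `H` containing `t`, all members of that edge are reachable from `t`
in `graphOf H`. -/
lemma reach_all_of_mem {H : Finset (Sym2 V)} (hnd : ∀ e ∈ H, ¬ e.IsDiag)
    {e : Sym2 V} (he : e ∈ H) {t : V} (ht : t ∈ e) :
    ∀ z ∈ e, (graphOf H).Reachable t z := by
  intro z hz
  by_cases hzt : z = t
  · subst hzt; exact SimpleGraph.Reachable.refl z
  · have he' : e = s(t, z) := sym2_eq_of_mem ht hz (Ne.symm hzt)
    have : (graphOf H).Adj t z := ⟨Ne.symm hzt, by rwa [← he']⟩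
    exact this.reachable

end DegHelpers
section FactorCritical

variable {V : Type*}

/-- **Key exchange lemma**: in a connected graph where every vertex is avoidable by some
maximum-weight matching, every matching `N` satisfies
`w(N) - |N| ≤ μ_w - ⌊|S|/2⌋`. -/
lemma factor_critical_bound {A : Finset (Sym2 V)} (hA : ∀ e ∈ A, ¬ e.IsDiag)
    {w : Sym2 V → ℕ} (hw1 : ∀ e ∈ A, 1 ≤ w e)
    {S : Finset V} (hSA : ∀ e ∈ A, ∀ v ∈ e, v ∈ S)
    (hconn : ∀ a ∈ S, ∀ b ∈ S, (graphOf A).Reachable a b)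
    (havoid : ∀ u ∈ S, ∃ M, M ⊆ A ∧ IsMatching M ∧ (∑ e ∈ M, w e) = matchWeight A w ∧
      ∀ e ∈ M, u ∉ e) :
    ∀ N, N ⊆ A → IsMatching N → ∑ e ∈ N, w e + S.card / 2 ≤ matchWeight A w + N.card := by
  classical
  set μ := matchWeight A w with hμ
  set ℳ : Finset (Finset (Sym2 V)) := A.powerset.filter (fun N => IsMatching N) with hℳ
  have hℳmem : ∀ {N : Finset (Sym2 V)}, N ∈ ℳ ↔ N ⊆ A ∧ IsMatching N := by
    intro N
    simp [hℳ, Finset.mem_filter, Finset.mem_powerset]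
  have hℳne : (∅ : Finset (Sym2 V)) ∈ ℳ := hℳmem.mpr ⟨Finset.empty_subset A, isMatching_empty⟩
  set fZ : Finset (Sym2 V) → ℤ := fun N => (∑ e ∈ N, (w e : ℤ)) - N.card with hfZ
  obtain ⟨N₀, hN₀ℳ, hN₀max⟩ := ℳ.exists_max_image fZ ⟨∅, hℳne⟩
  set ℳf := ℳ.filter (fun N => fZ N = fZ N₀) with hℳf
  obtain ⟨N₁, hN₁, hN₁max⟩ := ℳf.exists_max_image (fun N => N.card)
    ⟨N₀, Finset.mem_filter.mpr ⟨hN₀ℳ, rfl⟩⟩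
  have hN₁ℳ : N₁ ⊆ A ∧ IsMatching N₁ := hℳmem.mp (Finset.mem_filter.mp hN₁).1
  have hN₁f : fZ N₁ = fZ N₀ := (Finset.mem_filter.mp hN₁).2
  -- the improvement step: a card-maximal fZ-maximizer has no two adjacent missed vertices
  have AP : ∀ N ∈ ℳf, (∀ N'' ∈ ℳf, N''.card ≤ N.card) → ∀ a b : V, a ≠ b → s(a, b) ∈ A →
      deg N a = 0 → deg N b = 0 → False := by
    intro N hNf hNmax a b hab hmem hda hdb
    have hNℳ := hℳmem.mp (Finset.mem_filter.mp hNf).1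
    have hNfZ : fZ N = fZ N₀ := (Finset.mem_filter.mp hNf).2
    have hnotmem : s(a, b) ∉ N := fun h => by
      have := one_le_deg h (Sym2.mem_mk_left a b)
      omega
    set N' := insert s(a, b) N with hN'
    have hN'A : N' ⊆ A := by
      intro e he
      rcases Finset.mem_insert.mp he with rfl | h
      · exact hmem
      · exact hNℳ.1 h
    have hN'm : IsMatching N' :=
      isMatching_insert hNℳ.2 hab (fun e he => deg_eq_zero_iff.mp hda e he)
        (fun e he => deg_eq_zero_iff.mp hdb e he)
    have hN'ℳ : N' ∈ ℳ := hℳmem.mpr ⟨hN'A, hN'm⟩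
    have hsum : ∑ e ∈ N', (w e : ℤ) = (w s(a, b) : ℤ) + ∑ e ∈ N, (w e : ℤ) :=
      Finset.sum_insert hnotmem
    have hcard : N'.card = N.card + 1 := Finset.card_insert_of_notMem hnotmem
    have hwab : 1 ≤ w s(a, b) := hw1 _ hmem
    have hup : fZ N ≤ fZ N' := by
      simp only [hfZ, hsum, hcard]
      push_cast
      omega
    have hdown : fZ N' ≤ fZ N := by
      rw [hNfZ]; exact hN₀max N' hN'ℳ
    have hN'f : N' ∈ ℳf := by
      refine Finset.mem_filter.mpr ⟨hN'ℳ, ?_⟩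
      have : fZ N' = fZ N := le_antisymm hdown hup
      rw [this, hNfZ]
    have := hNmax N' hN'f
    omega
  -- Key claim: the card-maximal fZ-maximizer misses at most one vertex of S
  have KC : (S.filter (fun z => deg N₁ z = 0)).card ≤ 1 := by
    by_contra hKC
    push_neg at hKC
    set P : ℕ → Prop := fun d => ∃ N ∈ ℳf, (∀ N'' ∈ ℳf, N''.card ≤ N.card) ∧
      ∃ u ∈ S, ∃ v ∈ S, u ≠ v ∧ deg N u = 0 ∧ deg N v = 0 ∧ (graphOf A).dist u v = d with hP
    have hPex : ∃ d, P d := by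
      obtain ⟨x, hx, y, hy, hxy⟩ := Finset.one_lt_card.mp hKC
      rw [Finset.mem_filter] at hx hy
      exact ⟨(graphOf A).dist x y, N₁, hN₁, hN₁max, x, hx.1, y, hy.1, hxy, hx.2, hy.2, rfl⟩
    obtain ⟨N, hNf, hNmax, u, huS, v, hvS, huv, hdu, hdv, hdist⟩ := Nat.find_spec hPex
    have hNsub : N ⊆ A ∧ IsMatching N := hℳmem.mp (Finset.mem_filter.mp hNf).1
    have hreach_uv : (graphOf A).Reachable u v := hconn u huS v hvS
    have hd₀pos : 0 < Nat.find hPex := by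
      have := hreach_uv.pos_dist_of_ne huv
      omega
    by_cases hd1 : Nat.find hPex = 1
    · have hadj : (graphOf A).Adj u v := SimpleGraph.dist_eq_one_iff_adj.mp (by omega)
      exact AP N hNf hNmax u v huv hadj.2 hdu hdv
    · have hd₀2 : 2 ≤ Nat.find hPex := by omega
      obtain ⟨t, hadj_vt, hdt⟩ := exists_pred hreach_uv huv.symm
      have hsvt : s(v, t) ∈ A := hadj_vt.2
      have htS : t ∈ S := hSA _ hsvt t (Sym2.mem_mk_right v t)
      have htu : t ≠ u := by
        intro h
        rw [h, SimpleGraph.dist_self] at hdt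
        omega
      have hdegt : deg N t = 1 := by
        rcases Nat.eq_zero_or_pos (deg N t) with h0 | hpos
        · exfalso
          have hPd : P ((graphOf A).dist u t) :=
            ⟨N, hNf, hNmax, u, huS, t, htS, Ne.symm htu, hdu, h0, rfl⟩
          exact Nat.find_min hPex (by omega) hPd
        · have := deg_le_one_of_isMatching hNsub.2 t
          omega
      obtain ⟨M, hMA, hMm, hMμ, hMt⟩ := havoid t htS
      set H := (N ∪ M) \ (N ∩ M) with hH
      have hHA : ∀ e ∈ H, e ∈ A := by
        intro e he
        rw [hH, Finset.mem_sdiff, Finset.mem_union] at he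
        rcases he.1 with h | h
        · exact hNsub.1 h
        · exact hMA h
      have hndH : ∀ e ∈ H, ¬ e.IsDiag := fun e he => hA e (hHA e he)
      set K := H.filter (fun e => ∀ z ∈ e, (graphOf H).Reachable t z) with hK
      have hKsub : K ⊆ H := Finset.filter_subset _ _
      have hcl : ∀ e ∈ K, ∀ f ∈ H, ∀ z : V, z ∈ e → z ∈ f → f ∈ K := by
        intro e he f hf z hze hzf
        rw [hK, Finset.mem_filter] at he ⊢
        exact ⟨hf, fun y hy => (he.2 z hze).trans (reach_all_of_mem hndH hf hzf y hy)⟩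
      set CF := K.biUnion (fun e => ({e.out.1, e.out.2} : Finset V)) with hCF
      obtain ⟨e_t, hetN, htet⟩ := exists_edge_of_deg_pos (show 0 < deg N t by omega)
      have hetM : e_t ∉ M := fun h => hMt e_t h htet
      have hetH : e_t ∈ H := by
        rw [hH, Finset.mem_sdiff, Finset.mem_union]
        exact ⟨Or.inl hetN, fun hc => hetM (Finset.mem_inter.mp hc).2⟩
      have hetK : e_t ∈ K := by
        rw [hK, Finset.mem_filter]
        exact ⟨hetH, reach_all_of_mem hndH hetH htet⟩
      have htCF : t ∈ CF := mem_CF_iff.mpr ⟨e_t, hetK, htet⟩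
      set KN := N ∩ K with hKN
      set KM := K \ N with hKM
      have hKNN : KN ⊆ N := Finset.inter_subset_left
      have hKNK : KN ⊆ K := Finset.inter_subset_right
      have hKMK : KM ⊆ K := Finset.sdiff_subset
      have hKMM : KM ⊆ M := by
        intro e he
        rw [hKM, Finset.mem_sdiff] at he
        have := hKsub he.1
        rw [hH, Finset.mem_sdiff, Finset.mem_union] at this
        rcases this.1 with h | h
        · exact absurd h he.2
        · exact h
      have hKunion : K = KN ∪ KM := by
        ext e
        rw [hKN, hKM]
        simp only [Finset.mem_union, Finset.mem_inter, Finset.mem_sdiff]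
        tauto
      have hKdisj : Disjoint KN KM := by
        rw [Finset.disjoint_left]
        intro e he he'
        rw [hKN, Finset.mem_inter] at he
        rw [hKM, Finset.mem_sdiff] at he'
        exact he'.2 he.1
      have hKCF : ∀ e ∈ K, ∀ z ∈ e, z ∈ CF := fun e he z hz => mem_CF_iff.mpr ⟨e, he, hz⟩
      have hndK : ∀ e ∈ K, ¬ e.IsDiag := fun e he => hndH e (hKsub he)
      have hCFcard : CF.card ≤ K.card + 1 := card_CF_le_card_K t hK
      have hdegKN1 : ∀ z : V, deg KN z ≤ 1 :=
        fun z => le_trans (deg_mono hKNN z) (deg_le_one_of_isMatching hNsub.2 z)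
      have hdegKM1 : ∀ z : V, deg KM z ≤ 1 :=
        fun z => le_trans (deg_mono hKMM z) (deg_le_one_of_isMatching hMm z)
      have hKsum : K.card = KN.card + KM.card := by
        rw [hKunion, Finset.card_union_of_disjoint hKdisj]
      have count_aux : ∀ (J : Finset (Sym2 V)), J ⊆ K → (∀ z : V, deg J z ≤ 1) →
          (CF.filter (fun z => deg J z = 0)).card + 2 * J.card = CF.card := by
        intro J hJK hJ1
        have hhs : ∑ z ∈ CF, deg J z = 2 * J.card :=
          handshake (fun e he => hndK e (hJK he)) (fun e he => hKCF e (hJK he))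
        have hsplit := Finset.sum_filter_add_sum_filter_not CF (fun z => deg J z = 0)
          (fun z => deg J z)
        have hzero : ∑ z ∈ CF.filter (fun z => deg J z = 0), deg J z = 0 :=
          Finset.sum_eq_zero (fun z hz => (Finset.mem_filter.mp hz).2)
        have hone : ∑ z ∈ CF.filter (fun z => ¬ deg J z = 0), deg J z
            = (CF.filter (fun z => ¬ deg J z = 0)).card := by
          rw [Finset.card_eq_sum_ones]
          apply Finset.sum_congr rfl
          intro z hz
          have h1 := (Finset.mem_filter.mp hz).2
          have h2 := hJ1 z
          omega
        have hpart := Finset.card_filter_add_card_filter_not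
          (s := CF) (p := fun z => deg J z = 0)
        omega
      have hKNcard := count_aux KN hKNK hdegKN1
      have hKMcard := count_aux KM hKMK hdegKM1
      have htonlyN : t ∈ CF.filter (fun z => deg KM z = 0) := by
        refine Finset.mem_filter.mpr ⟨htCF, ?_⟩
        have h1 : deg M t = 0 := deg_eq_zero_iff.mpr hMt
        have := deg_mono hKMM t
        omega
      have hnN1 : 1 ≤ (CF.filter (fun z => deg KM z = 0)).card :=
        Finset.card_pos.mpr ⟨t, htonlyN⟩
      have hmissCF : ∀ z, z ∈ CF → deg N z = 0 → z ∈ CF.filter (fun z => deg KN z = 0) := by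
        intro z hz hdz
        refine Finset.mem_filter.mpr ⟨hz, ?_⟩
        have := deg_mono hKNN z
        omega
      have hnotboth : ¬(u ∈ CF ∧ v ∈ CF) := by
        rintro ⟨huCF, hvCF⟩
        have h1 := hmissCF u huCF hdu
        have h2 := hmissCF v hvCF hdv
        have : 1 < (CF.filter (fun z => deg KN z = 0)).card :=
          Finset.one_lt_card.mpr ⟨u, h1, v, h2, huv⟩
        omega
      have hKcard : KM.card ≤ KN.card := by omega
      -- the swap
      set N' := (N \ K) ∪ (K \ N) with hN'
      have hN'm : IsMatching N' := swap_isMatching hNsub.2 hMm hKsub hcl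
      have hN'A : N' ⊆ A := by
        intro e he
        rcases Finset.mem_union.mp he with h | h
        · exact hNsub.1 (Finset.mem_sdiff.mp h).1
        · exact hHA e (hKsub (Finset.mem_sdiff.mp h).1)
      have hN'ℳ : N' ∈ ℳ := hℳmem.mpr ⟨hN'A, hN'm⟩
      have hsumw : ∑ e ∈ N', w e + ∑ e ∈ KN, w e = ∑ e ∈ N, w e + ∑ e ∈ KM, w e :=
        swap_sum w K N
      have hsumc : N'.card + KN.card = N.card + KM.card := by
        have h := swap_sum (fun _ => (1 : ℕ)) K N
        simpa using h
      -- the mirrored swap on M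
      set M' := (M \ K) ∪ (K \ M) with hM'
      have hHsymm : (M ∪ N) \ (M ∩ N) = H := by
        rw [hH, Finset.union_comm, Finset.inter_comm]
      have hM'm : IsMatching M' := by
        apply swap_isMatching hMm hNsub.2 (by rw [hHsymm]; exact hKsub)
        rw [hHsymm]
        exact hcl
      have hM'A : M' ⊆ A := by
        intro e he
        rcases Finset.mem_union.mp he with h | h
        · exact hMA (Finset.mem_sdiff.mp h).1
        · exact hHA e (hKsub (Finset.mem_sdiff.mp h).1)
      have hKMN : K \ M = KN := by
        ext e
        rw [hKN]
        simp only [Finset.mem_sdiff, Finset.mem_inter]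
        constructor
        · rintro ⟨heK, heM⟩
          have := hKsub heK
          rw [hH, Finset.mem_sdiff, Finset.mem_union] at this
          rcases this.1 with h | h
          · exact ⟨h, heK⟩
          · exact absurd h heM
        · rintro ⟨heN, heK⟩
          refine ⟨heK, fun heM => ?_⟩
          have := hKsub heK
          rw [hH, Finset.mem_sdiff] at this
          exact this.2 (Finset.mem_inter.mpr ⟨heN, heM⟩)
      have hMK : M ∩ K = KM := by
        ext e
        rw [hKM]
        simp only [Finset.mem_sdiff, Finset.mem_inter]
        constructor
        · rintro ⟨heM, heK⟩
          refine ⟨heK, fun heN => ?_⟩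
          have := hKsub heK
          rw [hH, Finset.mem_sdiff] at this
          exact this.2 (Finset.mem_inter.mpr ⟨heN, heM⟩)
        · rintro ⟨heK, heN⟩
          have := hKsub heK
          rw [hH, Finset.mem_sdiff, Finset.mem_union] at this
          rcases this.1 with h | h
          · exact absurd h heN
          · exact ⟨h, heK⟩
      have hsumM' : ∑ e ∈ M', w e + ∑ e ∈ KM, w e = μ + ∑ e ∈ KN, w e := by
        have h := swap_sum w K M
        rw [← hM', hMK, hKMN, hMμ] at h
        exact h
      have hM'le : ∑ e ∈ M', w e ≤ μ := le_matchWeight A w hM'A hM'm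
      have hwKNle : ∑ e ∈ KN, w e ≤ ∑ e ∈ KM, w e := by omega
      have hfZle : fZ N' ≤ fZ N := by
        rw [(Finset.mem_filter.mp hNf).2]
        exact hN₀max N' hN'ℳ
      have hcadeq : N'.card = N.card ∧ ∑ e ∈ N', w e = ∑ e ∈ N, w e := by
        simp only [hfZ] at hfZle
        have hc1 : (∑ e ∈ N', (w e : ℤ)) = ((∑ e ∈ N', w e : ℕ) : ℤ) := by push_cast; ring
        have hc2 : (∑ e ∈ N, (w e : ℤ)) = ((∑ e ∈ N, w e : ℕ) : ℤ) := by push_cast; ring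
        rw [hc1, hc2] at hfZle
        constructor <;> omega
      have hN'f : N' ∈ ℳf := by
        refine Finset.mem_filter.mpr ⟨hN'ℳ, ?_⟩
        have heq : fZ N' = fZ N := by
          simp only [hfZ]
          have hc1 : (∑ e ∈ N', (w e : ℤ)) = ((∑ e ∈ N', w e : ℕ) : ℤ) := by push_cast; ring
          have hc2 : (∑ e ∈ N, (w e : ℤ)) = ((∑ e ∈ N, w e : ℕ) : ℤ) := by push_cast; ring
          rw [hc1, hc2, hcadeq.1, hcadeq.2]
        rw [heq, (Finset.mem_filter.mp hNf).2]
      have hN'max : ∀ N'' ∈ ℳf, N''.card ≤ N'.card := by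
        intro N'' h
        rw [hcadeq.1]
        exact hNmax N'' h
      have hdegN't : deg N' t = 0 := by
        rw [deg, hN', swap_filter_eq_of_touched hNsub.2 hKsub hcl ⟨e_t, hetK, htet⟩]
        have h1 : deg M t = 0 := deg_eq_zero_iff.mpr hMt
        rw [deg] at h1
        exact h1
      by_cases hvCF : v ∈ CF
      · have huCF : u ∉ CF := fun h => hnotboth ⟨h, hvCF⟩
        have hdegN'u : deg N' u = 0 := by
          rw [deg, hN', swap_filter_eq_of_untouched (fun e he hue => huCF (hKCF e he u hue))]
          rw [deg] at hdu
          exact hdu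
        have hPd : P ((graphOf A).dist u t) :=
          ⟨N', hN'f, hN'max, u, huS, t, htS, Ne.symm htu, hdegN'u, hdegN't, rfl⟩
        exact Nat.find_min hPex (by omega) hPd
      · have hdegN'v : deg N' v = 0 := by
          rw [deg, hN', swap_filter_eq_of_untouched (fun e he hve => hvCF (hKCF e he v hve))]
          rw [deg] at hdv
          exact hdv
        exact AP N' hN'f hN'max v t hadj_vt.1 hsvt hdegN'v hdegN't
  -- wrap up
  intro N hNA hNm
  have h2card : S.card ≤ 2 * N₁.card + 1 := by
    have hhs : ∑ v ∈ S, deg N₁ v = 2 * N₁.card :=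
      handshake (fun e he => hA e (hN₁ℳ.1 he)) (fun e he v hv => hSA e (hN₁ℳ.1 he) v hv)
    have hsplit : ∑ v ∈ S, deg N₁ v = (S.filter (fun z => ¬ deg N₁ z = 0)).card := by
      rw [Finset.card_filter]
      apply Finset.sum_congr rfl
      intro v hv
      have := deg_le_one_of_isMatching hN₁ℳ.2 v
      split_ifs with h <;> omega
    have := Finset.card_filter_add_card_filter_not
      (s := S) (p := fun z => deg N₁ z = 0)
    omega
  have hfle : fZ N ≤ fZ N₁ := by
    rw [hN₁f]
    exact hN₀max N (hℳmem.mpr ⟨hNA, hNm⟩)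
  have hN₁w : ∑ e ∈ N₁, w e ≤ μ := le_matchWeight A w hN₁ℳ.1 hN₁ℳ.2
  simp only [hfZ] at hfle
  have hc1 : (∑ e ∈ N, (w e : ℤ)) = ((∑ e ∈ N, w e : ℕ) : ℤ) := by push_cast; ring
  have hc2 : (∑ e ∈ N₁, (w e : ℤ)) = ((∑ e ∈ N₁, w e : ℕ) : ℤ) := by push_cast; ring
  rw [hc1, hc2] at hfle
  omega

end FactorCritical
section SplitLemmas

variable {V : Type*}

lemma matchWeight_split {G : Finset (Sym2 V)} (w : Sym2 V → ℕ) {S : Finset V}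
    (hsplit : ∀ e ∈ G, (∀ v ∈ e, v ∈ S) ∨ (∀ v ∈ e, v ∉ S)) :
    matchWeight G w = matchWeight (G.filter (fun e => ∀ v ∈ e, v ∈ S)) w
      + matchWeight (G.filter (fun e => ¬ ∀ v ∈ e, v ∈ S)) w := by
  apply le_antisymm
  · obtain ⟨M, hMG, hMm, hMsum⟩ := matchWeight_spec G w
    rw [← hMsum, ← Finset.sum_filter_add_sum_filter_not M (fun e => ∀ v ∈ e, v ∈ S)]
    apply add_le_add
    · apply le_matchWeight
      · intro e he
        rw [Finset.mem_filter] at he ⊢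
        exact ⟨hMG he.1, he.2⟩
      · exact isMatching_subset (Finset.filter_subset _ _) hMm
    · apply le_matchWeight
      · intro e he
        rw [Finset.mem_filter] at he ⊢
        exact ⟨hMG he.1, he.2⟩
      · exact isMatching_subset (Finset.filter_subset _ _) hMm
  · obtain ⟨M₁, hM₁G, hM₁m, hM₁sum⟩ := matchWeight_spec (G.filter (fun e => ∀ v ∈ e, v ∈ S)) w
    obtain ⟨M₂, hM₂G, hM₂m, hM₂sum⟩ :=
      matchWeight_spec (G.filter (fun e => ¬ ∀ v ∈ e, v ∈ S)) w
    have hdisj : ∀ e ∈ M₁, ∀ f ∈ M₂, ∀ v : V, v ∈ e → v ∉ f := by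
      intro e he f hf v hve hvf
      have h1 := Finset.mem_filter.mp (hM₁G he)
      have h2 := Finset.mem_filter.mp (hM₂G hf)
      rcases hsplit f h2.1 with h | h
      · exact h2.2 h
      · exact h v hvf (h1.2 v hve)
    have hdisjset : Disjoint M₁ M₂ := by
      rw [Finset.disjoint_left]
      intro e he hf
      obtain ⟨v, hv⟩ := exists_mem_sym2 e
      exact hdisj e he e hf v hv hv
    have hunion : IsMatching (M₁ ∪ M₂) := isMatching_union hM₁m hM₂m hdisj
    have hsub : M₁ ∪ M₂ ⊆ G := by
      intro e he
      rcases Finset.mem_union.mp he with h | h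
      · exact (Finset.mem_filter.mp (hM₁G h)).1
      · exact (Finset.mem_filter.mp (hM₂G h)).1
    have := le_matchWeight G w hsub hunion
    rw [Finset.sum_union hdisjset, hM₁sum, hM₂sum] at this
    exact this

lemma caseA_bound {G : Finset (Sym2 V)} {w : Sym2 V → ℕ} (hw1 : ∀ e ∈ G, 1 ≤ w e) {u : V}
    (hu : ∀ M, M ⊆ G → IsMatching M → ∑ e ∈ M, w e = matchWeight G w → ∃ e ∈ M, u ∈ e) :
    matchWeight G (fun e => if e ∈ G ∧ u ∈ e then w e - 1 else w e) + 1 ≤ matchWeight G w := by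
  set w' : Sym2 V → ℕ := fun e => if e ∈ G ∧ u ∈ e then w e - 1 else w e with hw'
  obtain ⟨M', hM'G, hM'm, hM'sum⟩ := matchWeight_spec G w'
  by_cases hc : ∃ e ∈ M', u ∈ e
  · obtain ⟨e₀, he₀, hue₀⟩ := hc
    have hdeg : deg M' u = 1 :=
      le_antisymm (deg_le_one_of_isMatching hM'm u) (one_le_deg he₀ hue₀)
    have hsum : ∑ e ∈ M', w e = ∑ e ∈ M', w' e + 1 := by
      have hptw : ∀ e ∈ M', w e = w' e + (if u ∈ e then 1 else 0) := by
        intro e he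
        by_cases h : u ∈ e
        · have h1 := hw1 e (hM'G he)
          have h2 : w' e = w e - 1 := by simp [hw', hM'G he, h]
          rw [h2, if_pos h]
          omega
        · simp [hw', h]
      rw [Finset.sum_congr rfl hptw, Finset.sum_add_distrib, ← Finset.card_filter]
      rw [deg] at hdeg
      rw [hdeg]
    have hle := le_matchWeight G w hM'G hM'm
    omega
  · push_neg at hc
    have hsum : ∑ e ∈ M', w' e = ∑ e ∈ M', w e := by
      apply Finset.sum_congr rfl
      intro e he
      simp [hw', hc e he]
    have hne : ∑ e ∈ M', w e ≠ matchWeight G w := by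
      intro h
      obtain ⟨e, he, hue⟩ := hu M' hM'G hM'm h
      exact hc e he hue
    have hle := le_matchWeight G w hM'G hM'm
    omega

/-- Walks in `G` starting at a vertex reachable from `u₀` stay inside the reachable part. -/
lemma reachable_sub {G GS : Finset (Sym2 V)} (hG : ∀ e ∈ G, ¬ e.IsDiag) (u₀ : V)
    (hGS : ∀ e, e ∈ GS ↔ e ∈ G ∧ ∀ v ∈ e, (graphOf G).Reachable u₀ v) :
    ∀ {x y : V}, (graphOf G).Walk x y → (graphOf G).Reachable u₀ x →
      (graphOf GS).Reachable x y := by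
  intro x y p
  induction p with
  | nil => exact fun _ => SimpleGraph.Reachable.refl _
  | @cons a b c h p ih =>
    intro hx
    have hab : s(a, b) ∈ G := h.2
    have hmem : s(a, b) ∈ GS := by
      rw [hGS]
      exact ⟨hab, fun v hv => hx.trans
        (reach_all_of_mem hG hab (Sym2.mem_mk_left a b) v hv)⟩
    have hadj : (graphOf GS).Adj a b := ⟨h.1, hmem⟩
    exact hadj.reachable.trans (ih (hx.trans h.reachable))

end SplitLemmas
section Core

variable {V : Type*}

lemma matchWeight_mono {G' G : Finset (Sym2 V)} (h : G' ⊆ G) (w : Sym2 V → ℕ) :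
    matchWeight G' w ≤ matchWeight G w := by
  obtain ⟨M, hMG, hMm, hMsum⟩ := matchWeight_spec G' w
  rw [← hMsum]
  exact le_matchWeight G w (hMG.trans h) hMm

lemma core_bound : ∀ (n : ℕ) (G : Finset (Sym2 V)) (w : Sym2 V → ℕ) (y : Sym2 V → ℝ),
    (∑ e ∈ G, (w e + 1)) ≤ n →
    (∀ e ∈ G, ¬ e.IsDiag) →
    (∀ e, 0 ≤ y e) →
    (∀ u : V, ∑ e ∈ G.filter (fun e => u ∈ e), y e ≤ 1) →
    (∀ S : Finset V, ∑ e ∈ G.filter (fun e => ∀ v ∈ e, v ∈ S), y e ≤ ((S.card / 2 : ℕ) : ℝ)) →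
    ∑ e ∈ G, (w e : ℝ) * y e ≤ (matchWeight G w : ℝ) := by
  intro n
  induction n with
  | zero =>
    intro G w y hm hG hy0 hfrac hbl
    have hGempty : G = ∅ := by
      by_contra h
      obtain ⟨e, he⟩ := Finset.nonempty_iff_ne_empty.mpr h
      have h1 : w e + 1 ≤ ∑ e ∈ G, (w e + 1) :=
        Finset.single_le_sum (f := fun e => w e + 1) (fun _ _ => Nat.zero_le _) he
      omega
    subst hGempty
    simpa using (Nat.cast_nonneg (matchWeight (∅ : Finset (Sym2 V)) w) : (0:ℝ) ≤ _)
  | succ n ih =>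
    intro G w y hm hG hy0 hfrac hbl
    by_cases hGe : G = ∅
    · subst hGe
      simpa using (Nat.cast_nonneg (matchWeight (∅ : Finset (Sym2 V)) w) : (0:ℝ) ≤ _)
    by_cases h0 : ∃ e ∈ G, w e = 0
    · obtain ⟨e₀, he₀, hw0⟩ := h0
      have hsub : G.erase e₀ ⊆ G := Finset.erase_subset _ _
      have hmeas : ∑ e ∈ G.erase e₀, (w e + 1) ≤ n := by
        have h := Finset.sum_erase_add G (fun e => w e + 1) he₀
        omega
      have hcall := ih (G.erase e₀) w y hmeas (fun e he => hG e (hsub he)) hy0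
        (fun u => le_trans (Finset.sum_le_sum_of_subset_of_nonneg
          (Finset.filter_subset_filter _ hsub) (fun e _ _ => hy0 e)) (hfrac u))
        (fun S => le_trans (Finset.sum_le_sum_of_subset_of_nonneg
          (Finset.filter_subset_filter _ hsub) (fun e _ _ => hy0 e)) (hbl S))
      have hsumeq : ∑ e ∈ G, (w e : ℝ) * y e = ∑ e ∈ G.erase e₀, (w e : ℝ) * y e := by
        have h1 := Finset.sum_erase_add G (fun e => (w e : ℝ) * y e) he₀
        simp only [hw0, Nat.cast_zero, zero_mul, add_zero] at h1
        exact h1.symm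
      rw [hsumeq]
      refine le_trans hcall ?_
      exact_mod_cast matchWeight_mono hsub w
    push_neg at h0
    have hw1 : ∀ e ∈ G, 1 ≤ w e := fun e he => Nat.one_le_iff_ne_zero.mpr (h0 e he)
    by_cases hcA : ∃ u : V, ∀ M, M ⊆ G → IsMatching M →
        ∑ e ∈ M, w e = matchWeight G w → ∃ e ∈ M, u ∈ e
    · -- Case A: some vertex is covered by every maximum-weight matching
      obtain ⟨u, hu⟩ := hcA
      set w' : Sym2 V → ℕ := fun e => if e ∈ G ∧ u ∈ e then w e - 1 else w e with hw'
      obtain ⟨M₀, hM₀G, hM₀m, hM₀sum⟩ := matchWeight_spec G w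
      obtain ⟨e₀, he₀M, hue₀⟩ := hu M₀ hM₀G hM₀m hM₀sum
      have he₀G : e₀ ∈ G := hM₀G he₀M
      have hmeas : ∑ e ∈ G, (w' e + 1) ≤ n := by
        have hlt : ∑ e ∈ G, (w' e + 1) < ∑ e ∈ G, (w e + 1) := by
          apply Finset.sum_lt_sum
          · intro e he
            by_cases h : e ∈ G ∧ u ∈ e
            · simp only [hw', if_pos h]
              omega
            · simp only [hw', if_neg h]
              omega
          · refine ⟨e₀, he₀G, ?_⟩
            have h1 := hw1 e₀ he₀G
            simp only [hw', if_pos (⟨he₀G, hue₀⟩ : e₀ ∈ G ∧ u ∈ e₀)]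
            omega
        omega
      have hcall := ih G w' y hmeas hG hy0 hfrac hbl
      have hLHS : ∑ e ∈ G, (w e : ℝ) * y e ≤ ∑ e ∈ G, (w' e : ℝ) * y e + 1 := by
        have hpt : ∀ e ∈ G,
            (w e : ℝ) * y e ≤ (w' e : ℝ) * y e + (if u ∈ e then y e else 0) := by
          intro e he
          by_cases h : u ∈ e
          · have h1 := hw1 e he
            have h2 : w' e = w e - 1 := by simp [hw', he, h]
            rw [h2, if_pos h]
            have h3 : ((w e - 1 : ℕ) : ℝ) = (w e : ℝ) - 1 := by
              push_cast [h1]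
              ring
            rw [h3]
            exact le_of_eq (by ring)
          · have h2 : w' e = w e := by simp [hw', h]
            rw [h2, if_neg h, add_zero]
        calc ∑ e ∈ G, (w e : ℝ) * y e
            ≤ ∑ e ∈ G, ((w' e : ℝ) * y e + (if u ∈ e then y e else 0)) :=
              Finset.sum_le_sum hpt
          _ = ∑ e ∈ G, (w' e : ℝ) * y e + ∑ e ∈ G, (if u ∈ e then y e else 0) :=
              Finset.sum_add_distrib
          _ ≤ ∑ e ∈ G, (w' e : ℝ) * y e + 1 := by
              have h4 := hfrac u
              rw [Finset.sum_filter] at h4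
              linarith
      have hRHS : matchWeight G w' + 1 ≤ matchWeight G w := caseA_bound hw1 hu
      have hcast : (matchWeight G w' : ℝ) + 1 ≤ (matchWeight G w : ℝ) := by exact_mod_cast hRHS
      linarith
    · -- Case B: every vertex avoidable
      push_neg at hcA
      obtain ⟨e₀, he₀⟩ := Finset.nonempty_iff_ne_empty.mpr hGe
      obtain ⟨u₀, hu₀⟩ := exists_mem_sym2 e₀
      set S := (G.biUnion (fun e => ({e.out.1, e.out.2} : Finset V))).filter
        (fun z => (graphOf G).Reachable u₀ z) with hS
      set GS := G.filter (fun e => ∀ v ∈ e, v ∈ S) with hGSdef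
      set GR := G.filter (fun e => ¬ ∀ v ∈ e, v ∈ S) with hGRdef
      have hmemS : ∀ z, z ∈ S ↔
          z ∈ G.biUnion (fun e => ({e.out.1, e.out.2} : Finset V)) ∧
            (graphOf G).Reachable u₀ z := by
        intro z
        rw [hS, Finset.mem_filter]
      have hGSiff : ∀ e, e ∈ GS ↔ e ∈ G ∧ ∀ v ∈ e, (graphOf G).Reachable u₀ v := by
        intro e
        rw [hGSdef, Finset.mem_filter]
        constructor
        · rintro ⟨h1, h2⟩
          exact ⟨h1, fun v hv => ((hmemS v).mp (h2 v hv)).2⟩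
        · rintro ⟨h1, h2⟩
          exact ⟨h1, fun v hv => (hmemS v).mpr ⟨mem_CF_iff.mpr ⟨e, h1, hv⟩, h2 v hv⟩⟩
      have hsplitG : ∀ e ∈ G, (∀ v ∈ e, v ∈ S) ∨ (∀ v ∈ e, v ∉ S) := by
        intro e he
        by_cases h : ∃ v ∈ e, v ∈ S
        · obtain ⟨v, hv, hvS⟩ := h
          left
          intro z hz
          exact (hmemS z).mpr ⟨mem_CF_iff.mpr ⟨e, he, hz⟩,
            ((hmemS v).mp hvS).2.trans (reach_all_of_mem hG he hv z hz)⟩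
        · push_neg at h
          right
          exact h
      have he₀GS : e₀ ∈ GS :=
        (hGSiff e₀).mpr ⟨he₀, fun v hv => reach_all_of_mem hG he₀ hu₀ v hv⟩
      have hGSsub : GS ⊆ G := Finset.filter_subset _ _
      have hGRsub : GR ⊆ G := Finset.filter_subset _ _
      have hGSnd : ∀ e ∈ GS, ¬ e.IsDiag := fun e he => hG e (hGSsub he)
      have hGSw1 : ∀ e ∈ GS, 1 ≤ w e := fun e he => hw1 e (hGSsub he)
      have hGSsa : ∀ e ∈ GS, ∀ v ∈ e, v ∈ S := fun e he => (Finset.mem_filter.mp he).2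
      have hconnS : ∀ a ∈ S, ∀ b ∈ S, (graphOf GS).Reachable a b := by
        intro a ha b hb
        obtain ⟨p⟩ := ((hmemS a).mp ha).2
        obtain ⟨q⟩ := ((hmemS b).mp hb).2
        have h1 : (graphOf GS).Reachable u₀ a :=
          reachable_sub hG u₀ hGSiff p (SimpleGraph.Reachable.refl u₀)
        have h2 : (graphOf GS).Reachable u₀ b :=
          reachable_sub hG u₀ hGSiff q (SimpleGraph.Reachable.refl u₀)
        exact h1.symm.trans h2
      have hmwsplit := matchWeight_split w hsplitG
      rw [← hGSdef, ← hGRdef] at hmwsplit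
      have havoidS : ∀ u ∈ S, ∃ M, M ⊆ GS ∧ IsMatching M ∧
          (∑ e ∈ M, w e) = matchWeight GS w ∧ ∀ e ∈ M, u ∉ e := by
        intro u huS
        obtain ⟨M, hMG, hMm, hMsum, hMu⟩ := hcA u
        have hsub1 : M.filter (fun e => ∀ v ∈ e, v ∈ S) ⊆ GS := by
          intro e he
          rw [Finset.mem_filter] at he
          rw [hGSdef, Finset.mem_filter]
          exact ⟨hMG he.1, he.2⟩
        have hsub2 : M.filter (fun e => ¬ ∀ v ∈ e, v ∈ S) ⊆ GR := by
          intro e he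
          rw [Finset.mem_filter] at he
          rw [hGRdef, Finset.mem_filter]
          exact ⟨hMG he.1, he.2⟩
        have hle1 : ∑ e ∈ M.filter (fun e => ∀ v ∈ e, v ∈ S), w e ≤ matchWeight GS w :=
          le_matchWeight _ _ hsub1 (isMatching_subset (Finset.filter_subset _ _) hMm)
        have hle2 : ∑ e ∈ M.filter (fun e => ¬ ∀ v ∈ e, v ∈ S), w e ≤ matchWeight GR w :=
          le_matchWeight _ _ hsub2 (isMatching_subset (Finset.filter_subset _ _) hMm)
        have hsum := Finset.sum_filter_add_sum_filter_not M (fun e => ∀ v ∈ e, v ∈ S) w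
        refine ⟨M.filter (fun e => ∀ v ∈ e, v ∈ S), hsub1,
          isMatching_subset (Finset.filter_subset _ _) hMm, ?_,
          fun e he => hMu e (Finset.filter_subset _ _ he)⟩
        omega
      set w2 : Sym2 V → ℕ := fun e => if e ∈ GS then w e - 1 else w e with hw2
      have hmeas : ∑ e ∈ G, (w2 e + 1) ≤ n := by
        have hlt : ∑ e ∈ G, (w2 e + 1) < ∑ e ∈ G, (w e + 1) := by
          apply Finset.sum_lt_sum
          · intro e he
            by_cases h : e ∈ GS
            · simp only [hw2, if_pos h]
              omega
            · simp only [hw2, if_neg h]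
              omega
          · refine ⟨e₀, he₀, ?_⟩
            have h1 := hw1 e₀ he₀
            simp only [hw2, if_pos he₀GS]
            omega
        omega
      have hcall := ih G w2 y hmeas hG hy0 hfrac hbl
      have hLHS : ∑ e ∈ G, (w e : ℝ) * y e
          ≤ ∑ e ∈ G, (w2 e : ℝ) * y e + ((S.card / 2 : ℕ) : ℝ) := by
        have hpt : ∀ e ∈ G, (w e : ℝ) * y e
            ≤ (w2 e : ℝ) * y e + (if (∀ v ∈ e, v ∈ S) then y e else 0) := by
          intro e he
          by_cases h : ∀ v ∈ e, v ∈ S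
          · have h1 := hw1 e he
            have hGSe : e ∈ GS := by
              rw [hGSdef, Finset.mem_filter]
              exact ⟨he, h⟩
            have h2 : w2 e = w e - 1 := by simp [hw2, hGSe]
            rw [h2, if_pos h]
            have h3 : ((w e - 1 : ℕ) : ℝ) = (w e : ℝ) - 1 := by
              push_cast [h1]
              ring
            rw [h3]
            exact le_of_eq (by ring)
          · have hGSe : e ∉ GS := by
              rw [hGSdef, Finset.mem_filter]
              exact fun hc => h hc.2
            have h2 : w2 e = w e := by simp [hw2, hGSe]
            rw [h2, if_neg h, add_zero]
        calc ∑ e ∈ G, (w e : ℝ) * y e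
            ≤ ∑ e ∈ G, ((w2 e : ℝ) * y e + (if (∀ v ∈ e, v ∈ S) then y e else 0)) :=
              Finset.sum_le_sum hpt
          _ = ∑ e ∈ G, (w2 e : ℝ) * y e
              + ∑ e ∈ G, (if (∀ v ∈ e, v ∈ S) then y e else 0) := Finset.sum_add_distrib
          _ ≤ ∑ e ∈ G, (w2 e : ℝ) * y e + ((S.card / 2 : ℕ) : ℝ) := by
              have h4 := hbl S
              rw [Finset.sum_filter] at h4
              linarith
      have hRHS : matchWeight G w2 + S.card / 2 ≤ matchWeight G w := by
        obtain ⟨M', hM'G, hM'm, hM'sum⟩ := matchWeight_spec G w2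
        have hMSGS : M'.filter (fun e => ∀ v ∈ e, v ∈ S) ⊆ GS := by
          intro e he
          rw [Finset.mem_filter] at he
          rw [hGSdef, Finset.mem_filter]
          exact ⟨hM'G he.1, he.2⟩
        have hMRGR : M'.filter (fun e => ¬ ∀ v ∈ e, v ∈ S) ⊆ GR := by
          intro e he
          rw [Finset.mem_filter] at he
          rw [hGRdef, Finset.mem_filter]
          exact ⟨hM'G he.1, he.2⟩
        have hsumsplit := Finset.sum_filter_add_sum_filter_not M' (fun e => ∀ v ∈ e, v ∈ S) w2
        have hMSw : ∑ e ∈ M'.filter (fun e => ∀ v ∈ e, v ∈ S), w2 e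
            + (M'.filter (fun e => ∀ v ∈ e, v ∈ S)).card
            = ∑ e ∈ M'.filter (fun e => ∀ v ∈ e, v ∈ S), w e := by
          rw [Finset.card_eq_sum_ones, ← Finset.sum_add_distrib]
          apply Finset.sum_congr rfl
          intro e he
          have h1 := hGSw1 e (hMSGS he)
          have h2 : w2 e = w e - 1 := by simp [hw2, hMSGS he]
          omega
        have hMRw : ∑ e ∈ M'.filter (fun e => ¬ ∀ v ∈ e, v ∈ S), w2 e
            = ∑ e ∈ M'.filter (fun e => ¬ ∀ v ∈ e, v ∈ S), w e := by
          apply Finset.sum_congr rfl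
          intro e he
          have he' := Finset.mem_filter.mp he
          have hGSe : e ∉ GS := by
            rw [hGSdef, Finset.mem_filter]
            exact fun hc => he'.2 hc.2
          simp [hw2, hGSe]
        have hfc := factor_critical_bound hGSnd hGSw1 hGSsa hconnS havoidS
          (M'.filter (fun e => ∀ v ∈ e, v ∈ S)) hMSGS
          (isMatching_subset (Finset.filter_subset _ _) hM'm)
        have hMR_le : ∑ e ∈ M'.filter (fun e => ¬ ∀ v ∈ e, v ∈ S), w e ≤ matchWeight GR w :=
          le_matchWeight _ _ hMRGR (isMatching_subset (Finset.filter_subset _ _) hM'm)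
        omega
      have hcast : (matchWeight G w2 : ℝ) + ((S.card / 2 : ℕ) : ℝ) ≤ (matchWeight G w : ℝ) := by
        exact_mod_cast hRHS
      linarith

end Core

/-- approximate blossom inequality: if a fractional matching `x` on a
weighted graph `G` satisfies Σ_{e ∈ G[S]} x_e ≤ ⌊|S|/2⌋ for every vertex set `S` with
|S| ≤ 1/ε, then μ_w(G) ≥ (1−ε)·Σ_e w_e x_e. -/
theorem approximate_blossom_rounding
    (G : Finset (Sym2 V)) (hG : ∀ e ∈ G, ¬ e.IsDiag)
    (w x : Sym2 V → ℝ) (hw : ∀ e ∈ G, 0 ≤ w e)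
    (ε : ℝ) (hε : 0 < ε)
    (hx0 : ∀ e, 0 ≤ x e) (hx1 : ∀ e, x e ≤ 1)
    (hfrac : ∀ u : V, ∑ e ∈ G.filter (fun e => u ∈ e), x e ≤ 1)
    (hblossom : ∀ S : Finset V, (S.card : ℝ) ≤ 1 / ε →
      ∑ e ∈ G.filter (fun e => ∀ v ∈ e, v ∈ S), x e ≤ ((S.card / 2 : ℕ) : ℝ)) :
    matchWeightR G w ≥ (1 - ε) * ∑ e ∈ G, w e * x e := by
  classical
  rcases le_or_gt 1 ε with hε1 | hε1
  · have h1 : (1 - ε) * ∑ e ∈ G, w e * x e ≤ 0 := by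
      have hs : 0 ≤ ∑ e ∈ G, w e * x e :=
        Finset.sum_nonneg (fun e he => mul_nonneg (hw e he) (hx0 e))
      nlinarith
    have h2 := matchWeightR_nonneg G w
    linarith
  · set y : Sym2 V → ℝ := fun e => (1 - ε) * x e with hy
    have h1ε : 0 < 1 - ε := by linarith
    have hy0 : ∀ e, 0 ≤ y e := fun e => mul_nonneg (le_of_lt h1ε) (hx0 e)
    have hfracy : ∀ u : V, ∑ e ∈ G.filter (fun e => u ∈ e), y e ≤ 1 := by
      intro u
      have hs : ∑ e ∈ G.filter (fun e => u ∈ e), y e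
          = (1 - ε) * ∑ e ∈ G.filter (fun e => u ∈ e), x e := by
        rw [Finset.mul_sum]
      have h2 := hfrac u
      have h3 : 0 ≤ ∑ e ∈ G.filter (fun e => u ∈ e), x e :=
        Finset.sum_nonneg (fun e _ => hx0 e)
      rw [hs]
      nlinarith
    have hbly : ∀ S : Finset V, ∑ e ∈ G.filter (fun e => ∀ v ∈ e, v ∈ S), y e
        ≤ ((S.card / 2 : ℕ) : ℝ) := by
      intro S
      have hs : ∑ e ∈ G.filter (fun e => ∀ v ∈ e, v ∈ S), y e
          = (1 - ε) * ∑ e ∈ G.filter (fun e => ∀ v ∈ e, v ∈ S), x e := by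
        rw [Finset.mul_sum]
      have h3 : 0 ≤ ∑ e ∈ G.filter (fun e => ∀ v ∈ e, v ∈ S), x e :=
        Finset.sum_nonneg (fun e _ => hx0 e)
      rw [hs]
      rcases le_or_gt (S.card : ℝ) (1 / ε) with hc | hc
      · have h2 := hblossom S hc
        nlinarith [(Nat.cast_nonneg (S.card / 2) : (0:ℝ) ≤ ((S.card / 2 : ℕ) : ℝ))]
      · have hdeg := blossom_from_degrees hG hx0 S
        have hsumS : ∑ v ∈ S, ∑ e ∈ G.filter (fun e => v ∈ e), x e ≤ (S.card : ℝ) := by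
          calc ∑ v ∈ S, ∑ e ∈ G.filter (fun e => v ∈ e), x e
              ≤ ∑ _v ∈ S, (1 : ℝ) := Finset.sum_le_sum (fun v _ => hfrac v)
            _ = (S.card : ℝ) := by simp
        have hx_le : ∑ e ∈ G.filter (fun e => ∀ v ∈ e, v ∈ S), x e ≤ (S.card : ℝ) / 2 := by
          linarith
        have hfloor : ((S.card : ℝ) - 1) / 2 ≤ ((S.card / 2 : ℕ) : ℝ) := by
          have h5 : S.card ≤ 2 * (S.card / 2) + 1 := by omega
          have h6 := (Nat.cast_le (α := ℝ)).mpr h5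
          push_cast at h6
          linarith
        have hεS : 1 < (S.card : ℝ) * ε := (div_lt_iff₀ hε).mp hc
        nlinarith
    have hgoal_eq : (1 - ε) * ∑ e ∈ G, w e * x e = ∑ e ∈ G, w e * y e := by
      rw [Finset.mul_sum]
      apply Finset.sum_congr rfl
      intro e _
      simp only [hy]
      ring
    rw [ge_iff_le, hgoal_eq]
    apply le_of_forall_pos_le_add
    intro δ hδ
    have hyG : 0 ≤ ∑ e ∈ G, y e := Finset.sum_nonneg (fun e _ => hy0 e)
    obtain ⟨k, hk⟩ := exists_nat_gt ((∑ e ∈ G, y e) / δ)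
    have hk0 : 0 < (k : ℝ) := lt_of_le_of_lt (div_nonneg hyG (le_of_lt hδ)) hk
    set wk : Sym2 V → ℕ := fun e => ⌊(k : ℝ) * w e⌋₊ with hwk
    have hcore := core_bound (∑ e ∈ G, (wk e + 1)) G wk y le_rfl hG hy0 hfracy hbly
    have hsumlow : (k : ℝ) * ∑ e ∈ G, w e * y e - ∑ e ∈ G, y e
        ≤ ∑ e ∈ G, (wk e : ℝ) * y e := by
      rw [Finset.mul_sum, ← Finset.sum_sub_distrib]
      apply Finset.sum_le_sum
      intro e he
      have h1 : (k : ℝ) * w e - 1 ≤ (wk e : ℝ) := by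
        simp only [hwk]
        have := Nat.sub_one_lt_floor ((k : ℝ) * w e)
        linarith
      nlinarith [hy0 e]
    obtain ⟨Mk, hMkG, hMkm, hMksum⟩ := matchWeight_spec G wk
    have hup : (matchWeight G wk : ℝ) ≤ (k : ℝ) * matchWeightR G w := by
      rw [← hMksum]
      push_cast
      have h1 : ∀ e ∈ Mk, (wk e : ℝ) ≤ (k : ℝ) * w e := by
        intro e he
        simp only [hwk]
        exact Nat.floor_le (mul_nonneg (le_of_lt hk0) (hw e (hMkG he)))
      calc ∑ e ∈ Mk, (wk e : ℝ) ≤ ∑ e ∈ Mk, (k : ℝ) * w e := Finset.sum_le_sum h1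
        _ = (k : ℝ) * ∑ e ∈ Mk, w e := (Finset.mul_sum _ _ _).symm
        _ ≤ (k : ℝ) * matchWeightR G w :=
            mul_le_mul_of_nonneg_left (matchWeightR_ge G w hMkG hMkm) (le_of_lt hk0)
    have hdiv : ∑ e ∈ G, y e ≤ (k : ℝ) * δ := by
      rw [div_lt_iff₀ hδ] at hk
      linarith
    have hfinal : (k : ℝ) * ∑ e ∈ G, w e * y e ≤ (k : ℝ) * (matchWeightR G w + δ) := by
      have h2 : ∑ e ∈ G, (wk e : ℝ) * y e ≤ (matchWeight G wk : ℝ) := hcore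
      rw [mul_add]
      linarith
    exact le_of_mul_le_mul_left hfinal hk0
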